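/- Let Ω ⊂ ℤ_p be a Borel set of positive Haar measure. Then Ω is a tile of the group ℤ_p by translation (there exists T ⊂ ℤ_p with ∑_{t∈T} 1_Ω(x−t) = 1 for almost every x ∈ ℤ_p) if and only if Ω is a tile of ℚ_p by translation (there exists T′ ⊂ ℚ_p with ∑_{t∈T′} 1_Ω(x−t) = 1 for almost every x ∈ ℚ_p). -/

import Mathlib

open MeasureTheory Complex

noncomputable section

namespace PadicTiling

variable (p : ℕ) [hp : Fact p.Prime]

instance : MeasurableSpace ℚ_[p] := borel _
instance : BorelSpace ℚ_[p] := ⟨rfl⟩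

/-- The closed unit ball of `ℚ_[p]` (the set `ℤ_p`) as a positive compact set. -/
def unitBall : TopologicalSpace.PositiveCompacts ℚ_[p] where
  carrier := Metric.closedBall 0 1
  isCompact' := isCompact_closedBall 0 1
  interior_nonempty' := ⟨0, mem_interior_iff_mem_nhds.mpr (Metric.closedBall_mem_nhds 0 one_pos)⟩

/-- The Haar measure on `ℚ_[p]` normalized so that `ℤ_p` has measure `1`. -/
def mHaar : Measure ℚ_[p] := Measure.addHaarMeasure (unitBall p)

/-- `ℤ_p` as a subset of `ℚ_[p]`. -/
def Zp : Set ℚ_[p] := {x : ℚ_[p] | ‖x‖ ≤ 1}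

/-- The fractional part `{x}` of a `p`-adic number: the rational number
`∑_{n=v}^{-1} a_n p^n` given by the negative-power part of the digit expansion. -/
def padicFract (x : ℚ_[p]) : ℚ :=
  ((PadicInt.toZModPow ((-x.valuation).toNat)
      (⟨x * (p : ℚ_[p]) ^ ((-x.valuation).toNat), by
        rcases eq_or_ne x 0 with hx | hx
        · simp [hx]
        · have hp1 : (1 : ℝ) < p := Nat.one_lt_cast.mpr hp.out.one_lt
          rw [norm_mul, Padic.norm_eq_zpow_neg_valuation hx, Padic.norm_p_pow,
            ← zpow_add₀ (by positivity : (p : ℝ) ≠ 0)]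
          apply zpow_le_one_of_nonpos₀ (le_of_lt hp1) (by omega)
          ⟩ : ℤ_[p])).val : ℚ) / (p : ℚ) ^ ((-x.valuation).toNat)

/-- The standard additive character `χ(x) = e^{2πi {x}}` of `ℚ_[p]`. -/
def padicChar (x : ℚ_[p]) : ℂ :=
  Complex.exp (2 * Real.pi * Complex.I * (padicFract p x : ℂ))

/-- Auxiliary: `z` is close to (the cast of) its approximation mod `p^n`. -/
lemma toZModPow_val_close (n : ℕ) (z : ℤ_[p]) :
    ‖(z : ℚ_[p]) - (((PadicInt.toZModPow n z).val : ℕ) : ℚ_[p])‖ ≤ (p : ℝ) ^ (-n : ℤ) := by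
  haveI : NeZero (p ^ n) := ⟨pow_ne_zero n hp.out.pos.ne'⟩
  have hmem : z - (((PadicInt.toZModPow n z).val : ℕ) : ℤ_[p]) ∈
      (Ideal.span {(p : ℤ_[p]) ^ n} : Ideal ℤ_[p]) := by
    rw [← PadicInt.ker_toZModPow, RingHom.mem_ker, map_sub, map_natCast,
      ZMod.natCast_zmod_val, sub_self]
  have h := (PadicInt.norm_le_pow_iff_mem_span_pow _ n).mpr hmem
  have hcast : ((z - (((PadicInt.toZModPow n z).val : ℕ) : ℤ_[p]) : ℤ_[p]) : ℚ_[p])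
      = (z : ℚ_[p]) - (((PadicInt.toZModPow n z).val : ℕ) : ℚ_[p]) := by push_cast; ring
  rwa [PadicInt.norm_def, hcast] at h

/-- The fractional part is of the form `a / p^N` with `a < p^N`, and `x - {x} ∈ ℤ_p`. -/
lemma padicFract_spec (x : ℚ_[p]) :
    ∃ a N : ℕ, a < p ^ N ∧ padicFract p x = (a : ℚ) / (p : ℚ) ^ N ∧
      ‖x - ((padicFract p x : ℚ) : ℚ_[p])‖ ≤ 1 := by
  haveI : NeZero (p ^ ((-x.valuation).toNat)) := ⟨pow_ne_zero _ hp.out.pos.ne'⟩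
  set N := (-x.valuation).toNat with hN
  have hz1 : ‖x * (p : ℚ_[p]) ^ N‖ ≤ 1 := by
    rcases eq_or_ne x 0 with hx | hx
    · simp [hx]
    · have hp1 : (1 : ℝ) < p := Nat.one_lt_cast.mpr hp.out.one_lt
      rw [norm_mul, Padic.norm_eq_zpow_neg_valuation hx, Padic.norm_p_pow,
        ← zpow_add₀ (by positivity : (p : ℝ) ≠ 0)]
      apply zpow_le_one_of_nonpos₀ (le_of_lt hp1) (by omega)
  set z : ℤ_[p] := ⟨x * (p : ℚ_[p]) ^ N, hz1⟩ with hzdef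
  set a := (PadicInt.toZModPow N z).val with ha
  have hfr : padicFract p x = (a : ℚ) / (p : ℚ) ^ N := rfl
  refine ⟨a, N, ZMod.val_lt _, hfr, ?_⟩
  rw [hfr]
  have hppos : (0 : ℝ) < (p : ℝ) := Nat.cast_pos.mpr hp.out.pos
  have hpne : ((p : ℚ_[p])) ≠ 0 := by
    exact_mod_cast (Nat.cast_ne_zero (R := ℚ_[p])).mpr hp.out.pos.ne'
  have hpN : ((p : ℚ_[p]) ^ N) ≠ 0 := pow_ne_zero _ hpne
  have hzc : (z : ℚ_[p]) = x * (p : ℚ_[p]) ^ N := rfl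
  have h1 : (((a : ℚ) / (p : ℚ) ^ N : ℚ) : ℚ_[p]) = (a : ℚ_[p]) / (p : ℚ_[p]) ^ N := by
    push_cast; ring
  have h2 : x - (a : ℚ_[p]) / (p : ℚ_[p]) ^ N
      = ((z : ℚ_[p]) - (a : ℚ_[p])) / (p : ℚ_[p]) ^ N := by
    rw [hzc]; field_simp
  rw [h1, h2, norm_div, Padic.norm_p_pow]
  have h3 := toZModPow_val_close p N z
  have hpos : (0 : ℝ) < (p : ℝ) ^ (-N : ℤ) := zpow_pos hppos _
  calc ‖(z : ℚ_[p]) - (a : ℚ_[p])‖ / (p : ℝ) ^ (-N : ℤ)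
      ≤ (p : ℝ) ^ (-N : ℤ) / (p : ℝ) ^ (-N : ℤ) := by gcongr
    _ = 1 := div_self hpos.ne'

/-- Uniqueness of representatives of the form `a / p^N` in `[0,1)` modulo `ℤ_p`. -/
lemma fract_form_unique {a b N M : ℕ} (ha : a < p ^ N) (hb : b < p ^ M)
    (h : ‖(((a : ℚ) / (p : ℚ) ^ N - (b : ℚ) / (p : ℚ) ^ M : ℚ) : ℚ_[p])‖ ≤ 1) :
    (a : ℚ) / (p : ℚ) ^ N = (b : ℚ) / (p : ℚ) ^ M := by
  have hp0 : (0 : ℚ) < (p : ℚ) := by exact_mod_cast hp.out.pos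
  have hpN : (0 : ℚ) < (p : ℚ) ^ N := by positivity
  have hpM : (0 : ℚ) < (p : ℚ) ^ M := by positivity
  have hppos : (0 : ℝ) < (p : ℝ) := Nat.cast_pos.mpr hp.out.pos
  have hpne : ((p : ℚ_[p])) ≠ 0 := by
    exact_mod_cast (Nat.cast_ne_zero (R := ℚ_[p])).mpr hp.out.pos.ne'
  set m : ℤ := (a : ℤ) * (p : ℤ) ^ M - (b : ℤ) * (p : ℤ) ^ N with hm
  set k := N + M with hk
  have hq : (a : ℚ) / (p : ℚ) ^ N - (b : ℚ) / (p : ℚ) ^ M = (m : ℚ) / (p : ℚ) ^ k := by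
    rw [hm, hk]; push_cast; field_simp; ring
  have hdvd : ((p : ℤ) ^ k) ∣ m := by
    rw [← Padic.norm_int_le_pow_iff_dvd]
    have hcast : ((m : ℤ) : ℚ_[p])
        = (((a : ℚ) / (p : ℚ) ^ N - (b : ℚ) / (p : ℚ) ^ M : ℚ) : ℚ_[p]) * (p : ℚ_[p]) ^ k := by
      rw [hq]; push_cast; field_simp
    rw [hcast, norm_mul, Padic.norm_p_pow]
    calc ‖(((a : ℚ) / (p : ℚ) ^ N - (b : ℚ) / (p : ℚ) ^ M : ℚ) : ℚ_[p])‖ * (p : ℝ) ^ (-k : ℤ)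
        ≤ 1 * (p : ℝ) ^ (-k : ℤ) :=
          mul_le_mul_of_nonneg_right h (le_of_lt (zpow_pos hppos _))
      _ = (p : ℝ) ^ (-k : ℤ) := one_mul _
  obtain ⟨c, hc⟩ := hdvd
  have hq2 : (a : ℚ) / (p : ℚ) ^ N - (b : ℚ) / (p : ℚ) ^ M = (c : ℚ) := by
    rw [hq, hc]; push_cast; field_simp
  have habs : |(a : ℚ) / (p : ℚ) ^ N - (b : ℚ) / (p : ℚ) ^ M| < 1 := by
    rw [abs_sub_lt_iff]
    have h1 : (a : ℚ) / (p : ℚ) ^ N < 1 := (div_lt_one hpN).mpr (by exact_mod_cast ha)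
    have h2 : (b : ℚ) / (p : ℚ) ^ M < 1 := (div_lt_one hpM).mpr (by exact_mod_cast hb)
    have h3 : (0 : ℚ) ≤ (a : ℚ) / (p : ℚ) ^ N := by positivity
    have h4 : (0 : ℚ) ≤ (b : ℚ) / (p : ℚ) ^ M := by positivity
    constructor <;> linarith
  rw [hq2] at habs
  have hc0 : c = 0 := by
    have h5 : ((|c| : ℤ) : ℚ) < 1 := by rwa [← Int.cast_abs] at habs
    have h6 : |c| < 1 := by exact_mod_cast h5
    exact Int.abs_lt_one_iff.mp h6
  rw [hc0] at hq2
  push_cast at hq2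
  linarith [hq2]

/-- If two fractional parts differ by an element of `ℤ_p`, they are equal. -/
lemma padicFract_unique (x y : ℚ_[p])
    (h : ‖((padicFract p x : ℚ) : ℚ_[p]) - ((padicFract p y : ℚ) : ℚ_[p])‖ ≤ 1) :
    padicFract p x = padicFract p y := by
  obtain ⟨a, N, ha, hfa, -⟩ := padicFract_spec p x
  obtain ⟨b, M, hb, hfb, -⟩ := padicFract_spec p y
  rw [hfa, hfb] at h ⊢
  refine fract_form_unique p ha hb ?_
  rw [Rat.cast_sub]
  exact h

/-- A Borel set `Ω ⊆ ℤ_p` of positive Haar measure tiles `ℤ_p` by translation if and only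
if it tiles `ℚ_p` by translation. -/
theorem tile_Zp_iff_tile_Qp (Ω : Set ℚ_[p]) (hΩ : Ω ⊆ Zp p) (hmeas : MeasurableSet Ω)
    (hpos : 0 < mHaar p Ω) :
    (∃ T : Set ℚ_[p], T ⊆ Zp p ∧
        ∀ᵐ x ∂ (mHaar p).restrict (Zp p),
          ∑' t : T, Ω.indicator (fun _ => (1 : ℝ)) (x - t) = 1)
      ↔ (∃ T' : Set ℚ_[p],
        ∀ᵐ x ∂ mHaar p, ∑' t : T', Ω.indicator (fun _ => (1 : ℝ)) (x - t) = 1) := by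
  have hZm : MeasurableSet (Zp p) := by
    have : Zp p = Metric.closedBall 0 1 := by
      ext x; simp [Zp, Metric.mem_closedBall, dist_zero_right]
    rw [this]; exact measurableSet_closedBall
  haveI hinv : (mHaar p).IsAddLeftInvariant :=
    Measure.isAddLeftInvariant_addHaarMeasure (unitBall p)
  have nadd : ∀ a b : ℚ_[p], ‖a‖ ≤ 1 → ‖b‖ ≤ 1 → ‖a + b‖ ≤ 1 := by
    intro a b ha hb
    exact le_trans (Padic.nonarchimedean a b) (max_le ha hb)
  have nsub : ∀ a b : ℚ_[p], ‖a‖ ≤ 1 → ‖b‖ ≤ 1 → ‖a - b‖ ≤ 1 := by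
    intro a b ha hb
    rw [sub_eq_add_neg]
    exact nadd a (-b) ha (by rwa [norm_neg])
  constructor
  · rintro ⟨T, hTZ, hT⟩
    set fc : ℚ_[p] → ℚ_[p] := fun x => ((padicFract p x : ℚ) : ℚ_[p]) with hfc
    have hfcnorm : ∀ x, ‖x - fc x‖ ≤ 1 := by
      intro x
      obtain ⟨a, N, -, -, h⟩ := padicFract_spec p x
      exact h
    have hfcu : ∀ x y : ℚ_[p], ‖fc x - fc y‖ ≤ 1 → fc x = fc y := by
      intro x y h
      simp only [hfc]
      exact_mod_cast congrArg (fun q : ℚ => ((q : ℚ_[p]))) (padicFract_unique p x y h)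
    set N0 : Set ℚ_[p] :=
      {y | ¬ (∑' t : T, Ω.indicator (fun _ => (1 : ℝ)) (y - t) = 1)} ∩ Zp p with hN0
    have hN0null : mHaar p N0 = 0 := by
      rw [ae_iff] at hT
      exact (Measure.restrict_apply_eq_zero' hZm).mp hT
    refine ⟨{y | ∃ w : ℚ_[p], ∃ t ∈ T, y = fc w + t}, ?_⟩
    set T' : Set ℚ_[p] := {y | ∃ w : ℚ_[p], ∃ t ∈ T, y = fc w + t} with hT'
    have key : ∀ x : ℚ_[p], x - fc x ∉ N0 →
        ∑' t : T', Ω.indicator (fun _ => (1 : ℝ)) (x - t) = 1 := by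
      intro x hx
      have hyZ : x - fc x ∈ Zp p := hfcnorm x
      have hPy : ∑' t : T, Ω.indicator (fun _ => (1 : ℝ)) ((x - fc x) - t) = 1 := by
        by_contra hc
        exact hx ⟨hc, hyZ⟩
      have hS : (fun t => fc x + t) '' T ⊆ T' := by
        rintro _ ⟨t, ht, rfl⟩
        exact ⟨x, t, ht, rfl⟩
      have hind : T'.indicator (fun w => Ω.indicator (fun _ => (1 : ℝ)) (x - w))
          = ((fun t => fc x + t) '' T).indicator
              (fun w => Ω.indicator (fun _ => (1 : ℝ)) (x - w)) := by
        funext w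
        by_cases hw : w ∈ (fun t => fc x + t) '' T
        · rw [Set.indicator_of_mem hw, Set.indicator_of_mem (hS hw)]
        · rw [Set.indicator_of_notMem hw]
          by_cases hw' : w ∈ T'
          · rw [Set.indicator_of_mem hw']
            by_cases hmem : x - w ∈ Ω
            · exfalso
              obtain ⟨u, t, ht, rfl⟩ := hw'
              have h1 : ‖x - fc u - t‖ ≤ 1 := by
                have h0 : ‖x - (fc u + t)‖ ≤ 1 := hΩ hmem
                rwa [sub_add_eq_sub_sub] at h0
              have h2 : ‖x - fc u‖ ≤ 1 := by
                have := nadd (x - fc u - t) t h1 (hTZ ht)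
                rwa [sub_add_cancel] at this
              have h3 : ‖fc x - fc u‖ ≤ 1 := by
                have heq : fc x - fc u = (x - fc u) - (x - fc x) := by ring
                rw [heq]
                exact nsub _ _ h2 (hfcnorm x)
              exact hw ⟨t, ht, by rw [hfcu x u h3]⟩
            · exact Set.indicator_of_notMem hmem _
          · rw [Set.indicator_of_notMem hw']
      calc ∑' t : T', Ω.indicator (fun _ => (1 : ℝ)) (x - t)
          = ∑' w, T'.indicator (fun w => Ω.indicator (fun _ => (1 : ℝ)) (x - w)) w := by
            exact tsum_subtype T' (fun w => Ω.indicator (fun _ => (1 : ℝ)) (x - w))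
        _ = ∑' w, ((fun t => fc x + t) '' T).indicator
              (fun w => Ω.indicator (fun _ => (1 : ℝ)) (x - w)) w := by rw [hind]
        _ = ∑' t : ((fun t => fc x + t) '' T), Ω.indicator (fun _ => (1 : ℝ)) (x - t) := by
            exact (tsum_subtype ((fun t => fc x + t) '' T)
              (fun w => Ω.indicator (fun _ => (1 : ℝ)) (x - w))).symm
        _ = ∑' t : T, Ω.indicator (fun _ => (1 : ℝ)) (x - (fc x + t)) := by
            exact ((Equiv.Set.image (fun t => fc x + t) T (add_right_injective (fc x))).tsum_eq (fun b : ((fun t => fc x + t) '' T) =>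
              Ω.indicator (fun _ => (1 : ℝ)) (x - (b : ℚ_[p])))).symm
        _ = ∑' t : T, Ω.indicator (fun _ => (1 : ℝ)) ((x - fc x) - t) := by
            exact tsum_congr fun t => by rw [sub_add_eq_sub_sub]
        _ = 1 := hPy
    rw [ae_iff]
    have hsub : {x | ¬ (∑' t : T', Ω.indicator (fun _ => (1 : ℝ)) (x - t) = 1)} ⊆
        ⋃ (q : ℚ), (fun w => -((q : ℚ_[p])) + w) ⁻¹' N0 := by
      intro x hx
      have hxN : x - fc x ∈ N0 := by
        by_contra hc
        exact hx (key x hc)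
      refine Set.mem_iUnion.mpr ⟨padicFract p x, ?_⟩
      show -((padicFract p x : ℚ) : ℚ_[p]) + x ∈ N0
      have hxeq : -((padicFract p x : ℚ) : ℚ_[p]) + x = x - fc x := by
        simp only [hfc]; ring
      rw [hxeq]
      exact hxN

    refine le_antisymm ?_ zero_le
    calc mHaar p {x | ¬ (∑' t : T', Ω.indicator (fun _ => (1 : ℝ)) (x - t) = 1)}
        ≤ mHaar p (⋃ (q : ℚ), (fun w => -((q : ℚ_[p])) + w) ⁻¹' N0) := measure_mono hsub
      _ ≤ ∑' q : ℚ, mHaar p ((fun w => -((q : ℚ_[p])) + w) ⁻¹' N0) := measure_iUnion_le _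
      _ = ∑' q : ℚ, mHaar p N0 := by
          refine tsum_congr fun q => ?_
          exact measure_preimage_add (mHaar p) _ N0
      _ = 0 := by simp [hN0null]
  · rintro ⟨T', hT'⟩
    refine ⟨T' ∩ Zp p, Set.inter_subset_right, ?_⟩
    have h1 : ∀ᵐ x ∂(mHaar p).restrict (Zp p),
        ∑' t : T', Ω.indicator (fun _ => (1 : ℝ)) (x - t) = 1 :=
      hT'.filter_mono (ae_mono Measure.restrict_le_self)
    filter_upwards [h1, ae_restrict_mem hZm] with x hx1 hx2
    have hind : (T' ∩ Zp p).indicator (fun w => Ω.indicator (fun _ => (1 : ℝ)) (x - w))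
        = T'.indicator (fun w => Ω.indicator (fun _ => (1 : ℝ)) (x - w)) := by
      funext w
      by_cases hw : w ∈ T' ∩ Zp p
      · rw [Set.indicator_of_mem hw, Set.indicator_of_mem hw.1]
      · rw [Set.indicator_of_notMem hw]
        by_cases hw' : w ∈ T'
        · rw [Set.indicator_of_mem hw']
          have hwZ : w ∉ Zp p := fun h => hw ⟨hw', h⟩
          by_cases hmem : x - w ∈ Ω
          · exfalso
            apply hwZ
            have h3 : ‖x - w‖ ≤ 1 := hΩ hmem
            have heq : w = x - (x - w) := by ring
            show ‖w‖ ≤ 1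
            rw [heq]
            exact nsub _ _ hx2 h3
          · exact (Set.indicator_of_notMem hmem _).symm
        · rw [Set.indicator_of_notMem hw']
    calc ∑' t : ↥(T' ∩ Zp p), Ω.indicator (fun _ => (1 : ℝ)) (x - t)
        = ∑' w, (T' ∩ Zp p).indicator (fun w => Ω.indicator (fun _ => (1 : ℝ)) (x - w)) w := by
          exact tsum_subtype (T' ∩ Zp p) (fun w => Ω.indicator (fun _ => (1 : ℝ)) (x - w))
      _ = ∑' w, T'.indicator (fun w => Ω.indicator (fun _ => (1 : ℝ)) (x - w)) w := by rw [hind]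
      _ = ∑' t : T', Ω.indicator (fun _ => (1 : ℝ)) (x - t) := by
          exact (tsum_subtype T' (fun w => Ω.indicator (fun _ => (1 : ℝ)) (x - w))).symm
      _ = 1 := hx1

end PadicTiling
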